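/- The Cremona transformation C restricts to a biregular isomorphism X_Γ \ Σₙ → X_{Γ^∨} \ Σₙ between the graph hypersurface of a connected planar graph Γ and that of its dual, away from the union of coordinate hyperplanes Σₙ ⊂ ℙ^{n-1}; consequently [X_Γ \ Σₙ] = [X_{Γ^∨} \ Σₙ] in the Grothendieck ring. -/

import Mathlib

/-- A multigraph: vertices `V`, edges `E`, each edge `e` has endpoints `fst e` and `snd e`
(loops and parallel edges allowed). -/
structure Multigraph where
  V : Type
  E : Type
  fst : E → V
  snd : E → V

/-- Adjacency of two vertices through an edge belonging to the edge set `S`. -/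
def Multigraph.adjIn (G : Multigraph) (S : Set G.E) (u v : G.V) : Prop :=
  ∃ e ∈ S, (G.fst e = u ∧ G.snd e = v) ∨ (G.fst e = v ∧ G.snd e = u)

/-- The edge set `S` connects the whole vertex set of `G`. -/
def Multigraph.ConnectsIn (G : Multigraph) (S : Set G.E) : Prop :=
  ∀ u v : G.V, Relation.ReflTransGen (G.adjIn S) u v

/-- A spanning tree of `G`: a minimal connecting edge set. -/
def Multigraph.IsSpanningTree (G : Multigraph) (S : Set G.E) : Prop :=
  G.ConnectsIn S ∧ ∀ e ∈ S, ¬ G.ConnectsIn (S \ {e})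

/-- The edge set `S` contains a cycle: some edge of `S` has its endpoints still
connected after its removal from `S`. -/
def Multigraph.HasCycleIn (G : Multigraph) (S : Set G.E) : Prop :=
  ∃ e ∈ S, Relation.ReflTransGen (G.adjIn (S \ {e})) (G.fst e) (G.snd e)

open scoped Classical in
/-- The Kirchhoff graph polynomial `Ψ_Γ = ∑_{T spanning tree} ∏_{e ∉ T} t_e`. -/
noncomputable def Multigraph.kirchhoff (G : Multigraph) [Fintype G.E] [DecidableEq G.E] :
    MvPolynomial G.E ℤ :=
  ∑ T ∈ Finset.univ.filter (fun T : Finset G.E => G.IsSpanningTree ↑T),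
    ∏ e ∈ Tᶜ, MvPolynomial.X e

/-- The graph hypersurface `X_Γ = {t ∈ ℙ^{n-1} | Ψ_Γ(t) = 0}`. -/
noncomputable def Multigraph.hypersurface (G : Multigraph) [Fintype G.E] [DecidableEq G.E]
    (k : Type) [Field k] : Set (Projectivization k (G.E → k)) :=
  {x | MvPolynomial.eval₂ (Int.castRingHom k) x.rep G.kirchhoff = 0}

/-- `Σ_n`, the union of the coordinate hyperplanes in `ℙ^{n-1}`. -/
def coordHyperplanes (k : Type) [Field k] (E : Type) :
    Set (Projectivization k (E → k)) :=
  {x | ∃ e, x.rep e = 0}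

/-- `G'` is (combinatorially) a planar dual of `G` along the edge bijection `φ`:
spanning trees of `G` correspond exactly to complements of spanning trees of `G'`. -/
def IsDualPair (G G' : Multigraph) [Fintype G.E] [DecidableEq G.E] [DecidableEq G'.E]
    (φ : G.E ≃ G'.E) : Prop :=
  ∀ T : Finset G.E, G.IsSpanningTree ↑T ↔ G'.IsSpanningTree ↑(Tᶜ.image φ)

/-- `B ⊆ ℙ^{n-1}` is the image of `A ⊆ ℙ^{n-1}` under the Cremona transformation,
via a bijection `f : A ≃ B`: for every `x ∈ A`, the coordinates of `f x` are
proportional to the inverses of those of `x`, i.e. `xᵢ·(f x)ᵢ` is independent of `i`. -/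
def CremonaIso {k : Type} [Field k] {E E' : Type} (φ : E ≃ E')
    (A : Set (Projectivization k (E → k))) (B : Set (Projectivization k (E' → k))) : Prop :=
  ∃ f : A ≃ B, ∀ (x : A) (e e' : E),
    (x : Projectivization k (E → k)).rep e *
        ((f x : Projectivization k (E' → k))).rep (φ e) =
      (x : Projectivization k (E → k)).rep e' *
        ((f x : Projectivization k (E' → k))).rep (φ e')


variable {G : Multigraph}

lemma adjIn_symm {S : Set G.E} {u v : G.V} (h : G.adjIn S u v) : G.adjIn S v u := by
  obtain ⟨e, he, h | h⟩ := h
  · exact ⟨e, he, Or.inr h⟩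
  · exact ⟨e, he, Or.inl h⟩

lemma rtg_symm {S : Set G.E} {u v : G.V}
    (h : Relation.ReflTransGen (G.adjIn S) u v) :
    Relation.ReflTransGen (G.adjIn S) v u := by
  induction h with
  | refl => exact .refl
  | tail _ hbc ih => exact .trans (.single (adjIn_symm hbc)) ih

lemma rtg_mono {S1 S2 : Set G.E} (h : S1 ⊆ S2) {u v : G.V}
    (hr : Relation.ReflTransGen (G.adjIn S1) u v) :
    Relation.ReflTransGen (G.adjIn S2) u v := by
  refine Relation.ReflTransGen.mono (p := G.adjIn S2) ?_ _ _ hr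
  rintro a b ⟨e, he, ho⟩
  exact ⟨e, h he, ho⟩

/-- If the endpoints of `e` remain connected after deleting `e`, deleting `e`
preserves global connectivity. -/
lemma connectsIn_sdiff {S : Set G.E} {e : G.E}
    (hb : Relation.ReflTransGen (G.adjIn (S \ {e})) (G.fst e) (G.snd e))
    (hc : G.ConnectsIn S) : G.ConnectsIn (S \ {e}) := by
  intro u v
  have step : ∀ a b : G.V, G.adjIn S a b →
      Relation.ReflTransGen (G.adjIn (S \ {e})) a b := by
    rintro a b ⟨f, hf, ho⟩
    by_cases hfe : f = e
    · subst hfe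
      rcases ho with ⟨h1, h2⟩ | ⟨h1, h2⟩
      · rw [← h1, ← h2]; exact hb
      · rw [← h1, ← h2]; exact rtg_symm hb
    · exact .single ⟨f, ⟨hf, hfe⟩, ho⟩
  induction hc u v with
  | refl => exact .refl
  | tail _ hbc ih => exact .trans ih (step _ _ hbc)

lemma spanningTree_fst_ne_snd {T : Set G.E} (hT : G.IsSpanningTree T) {e : G.E}
    (he : e ∈ T) : G.fst e ≠ G.snd e := by
  intro h
  exact hT.2 e he (connectsIn_sdiff (h ▸ Relation.ReflTransGen.refl) hT.1)

lemma spanningTree_no_parallel {T : Set G.E} (hT : G.IsSpanningTree T) {e f : G.E}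
    (he : e ∈ T) (hf : f ∈ T) (hef : e ≠ f)
    (hsym : s(G.fst e, G.snd e) = s(G.fst f, G.snd f)) : False := by
  apply hT.2 f hf
  apply connectsIn_sdiff _ hT.1
  rw [Sym2.eq_iff] at hsym
  refine Relation.ReflTransGen.single ⟨e, ⟨he, hef⟩, ?_⟩
  rcases hsym with ⟨h1, h2⟩ | ⟨h1, h2⟩
  · exact Or.inl ⟨h1, h2⟩
  · exact Or.inr ⟨h1, h2⟩

lemma finiteV [Fintype G.E] (hconn : G.ConnectsIn Set.univ) (h : Nonempty G.V) : Finite G.V := by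
  obtain ⟨u⟩ := h
  refine Finite.of_surjective
    (fun o : Option (G.E × Bool) => o.elim u (fun p => if p.2 then G.fst p.1 else G.snd p.1)) ?_
  intro v
  induction hconn u v with
  | refl => exact ⟨none, rfl⟩
  | tail _ hbc _ =>
    obtain ⟨e, _, ⟨_, h2⟩ | ⟨h1, _⟩⟩ := hbc
    · exact ⟨some (e, false), h2⟩
    · exact ⟨some (e, true), h1⟩

open SimpleGraph in
lemma spanningTree_card [Fintype G.V] [Nonempty G.V] {T : Finset G.E}
    (hT : G.IsSpanningTree ↑T) : T.card + 1 = Fintype.card G.V := by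
  classical
  let H : SimpleGraph G.V :=
    { Adj := fun u v => u ≠ v ∧ G.adjIn ↑T u v
      symm := ⟨fun u v h => ⟨h.1.symm, adjIn_symm h.2⟩⟩
      loopless := ⟨fun v h => h.1 rfl⟩ }
  have hreach : ∀ u v : G.V, Relation.ReflTransGen (G.adjIn ↑T) u v → H.Reachable u v := by
    intro u v h
    induction h with
    | refl => exact Reachable.refl _
    | @tail b c _ hbc ih =>
      by_cases hbceq : b = c
      · exact hbceq ▸ ih
      · exact ih.trans (Adj.reachable ⟨hbceq, hbc⟩)
  have hconn' : H.Connected := by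
    rw [connected_iff]
    exact ⟨fun u v => hreach u v (hT.1 u v), inferInstance⟩
  have hacyc : H.IsAcyclic := by
    rw [isAcyclic_iff_forall_adj_isBridge]
    intro v w hvw
    rw [isBridge_iff]
    refine fun hre => ?_
    obtain ⟨e, he, hor⟩ := hvw.2
    have hsvw : s(G.fst e, G.snd e) = s(v, w) := by
      rcases hor with ⟨h1, h2⟩ | ⟨h1, h2⟩
      · rw [h1, h2]
      · rw [h1, h2]; exact Sym2.eq_swap
    have hrtg : Relation.ReflTransGen (G.adjIn (↑T \ {e})) v w := by
      rw [reachable_iff_reflTransGen] at hre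
      refine Relation.ReflTransGen.mono ?_ _ _ hre
      rintro a b ⟨⟨hab, f, hfT, hfor⟩, hnadj⟩
      have hsab : s(G.fst f, G.snd f) = s(a, b) := by
        rcases hfor with ⟨h1, h2⟩ | ⟨h1, h2⟩
        · rw [h1, h2]
        · rw [h1, h2]; exact Sym2.eq_swap
      have hfe : f ≠ e := by
        rintro rfl
        apply hnadj
        rw [fromEdgeSet_adj]
        refine ⟨?_, hab⟩
        rw [Set.mem_singleton_iff, ← hsab, hsvw]
      exact ⟨f, ⟨hfT, hfe⟩, hfor⟩
    have hrtg' : Relation.ReflTransGen (G.adjIn (↑T \ {e})) (G.fst e) (G.snd e) := by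
      rcases hor with ⟨h1, h2⟩ | ⟨h1, h2⟩
      · rw [h1, h2]; exact hrtg
      · rw [h1, h2]; exact rtg_symm hrtg
    exact hT.2 e he (connectsIn_sdiff hrtg' hT.1)
  have htree : H.IsTree := ⟨hconn', hacyc⟩
  have : Fintype H.edgeSet := Fintype.ofFinite _
  have hedge : H.edgeFinset = T.image (fun e => s(G.fst e, G.snd e)) := by
    ext x
    induction x with
    | _ u v =>
      simp only [mem_edgeFinset, mem_edgeSet, Finset.mem_image]
      constructor
      · rintro ⟨hne, e, he, hor⟩
        refine ⟨e, he, ?_⟩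
        rcases hor with ⟨h1, h2⟩ | ⟨h1, h2⟩
        · rw [h1, h2]
        · rw [h1, h2]; exact Sym2.eq_swap
      · rintro ⟨e, he, hx⟩
        rw [Sym2.eq_iff] at hx
        have hne := spanningTree_fst_ne_snd hT (Finset.mem_coe.mpr he)
        rcases hx with ⟨h1, h2⟩ | ⟨h1, h2⟩
        · exact ⟨by rw [← h1, ← h2]; exact hne, e, he, Or.inl ⟨h1, h2⟩⟩
        · exact ⟨by rw [← h1, ← h2]; exact hne.symm, e, he, Or.inr ⟨h1, h2⟩⟩
  have hcard : H.edgeFinset.card = T.card := by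
    rw [hedge]
    apply Finset.card_image_of_injOn
    intro e he f hf hef
    by_contra hne
    exact spanningTree_no_parallel hT (Finset.mem_coe.mpr he) (Finset.mem_coe.mpr hf) hne hef
  rw [← hcard]
  exact htree.card_edgeFinset

lemma spanningTree_card_eq [Fintype G.E] (hconn : G.ConnectsIn Set.univ)
    {T1 T2 : Finset G.E} (h1 : G.IsSpanningTree ↑T1) (h2 : G.IsSpanningTree ↑T2) :
    T1.card = T2.card := by
  classical
  cases isEmpty_or_nonempty G.V with
  | inl h =>
    have hall : ∀ S : Set G.E, G.ConnectsIn S := fun S u v => (h.false u).elim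
    have hemp : ∀ (T : Finset G.E), G.IsSpanningTree ↑T → T = ∅ := by
      intro T hT
      by_contra hne
      obtain ⟨e, he⟩ := Finset.nonempty_iff_ne_empty.mpr hne
      exact hT.2 e he (hall _)
    rw [hemp T1 h1, hemp T2 h2]
  | inr h =>
    have : Finite G.V := finiteV hconn h
    have : Fintype G.V := Fintype.ofFinite _
    have e1 := spanningTree_card h1
    have e2 := spanningTree_card h2
    omega



open scoped Classical in
lemma eval_kirchhoff {k : Type} [CommRing k] (G : Multigraph) [Fintype G.E] [DecidableEq G.E]
    (v : G.E → k) :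
    MvPolynomial.eval₂ (Int.castRingHom k) v G.kirchhoff =
      ∑ T ∈ Finset.univ.filter (fun T : Finset G.E => G.IsSpanningTree ↑T),
        ∏ e ∈ Tᶜ, v e := by
  rw [Multigraph.kirchhoff, ← MvPolynomial.coe_eval₂Hom, map_sum]
  refine Finset.sum_congr rfl fun T _ => ?_
  rw [map_prod]
  exact Finset.prod_congr rfl fun e _ => MvPolynomial.eval₂Hom_X' _ _ _

lemma image_compl_eq {α β : Type*} [Fintype α] [Fintype β] [DecidableEq α] [DecidableEq β]
    (φ : α ≃ β) (T : Finset α) : (T.image φ)ᶜ = Tᶜ.image φ := by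
  ext b
  simp only [Finset.mem_compl, Finset.mem_image]
  constructor
  · intro h
    exact ⟨φ.symm b, fun hc => h ⟨_, hc, by simp⟩, by simp⟩
  · rintro ⟨a, ha, rfl⟩ ⟨a', ha', haa⟩
    exact ha (φ.injective haa ▸ ha')

lemma eval_key {k : Type} [Field k] (G G' : Multigraph) [Fintype G.E] [DecidableEq G.E]
    [Fintype G'.E] [DecidableEq G'.E] (φ : G.E ≃ G'.E) (hdual : IsDualPair G G' φ)
    (m : ℕ) (hm : ∀ T : Finset G.E, G.IsSpanningTree ↑T → T.card = m)
    (v : G.E → k) (v' : G'.E → k) (κ : k)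
    (hv : ∀ e, v e ≠ 0) (hκ : ∀ e, v e * v' (φ e) = κ) :
    (∏ e, v e) * MvPolynomial.eval₂ (Int.castRingHom k) v' G'.kirchhoff =
      κ ^ m * MvPolynomial.eval₂ (Int.castRingHom k) v G.kirchhoff := by
  classical
  rw [eval_kirchhoff, eval_kirchhoff, Finset.mul_sum, Finset.mul_sum]
  have hv' : ∀ e, v' (φ e) = (v e)⁻¹ * κ := fun e => by
    rw [← hκ e, ← mul_assoc, inv_mul_cancel₀ (hv e), one_mul]
  refine Finset.sum_nbij' (i := fun T' => (T'.image φ.symm)ᶜ)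
    (j := fun T => Tᶜ.image φ) ?_ ?_ ?_ ?_ ?_
  · intro T' hT'
    rw [Finset.mem_filter] at hT' ⊢
    refine ⟨Finset.mem_univ _, ?_⟩
    have := (hdual ((T'.image φ.symm)ᶜ)).symm
    rw [compl_compl, Finset.image_image, Equiv.self_comp_symm, Finset.image_id] at this
    exact this.mp hT'.2
  · intro T hT
    rw [Finset.mem_filter] at hT ⊢
    exact ⟨Finset.mem_univ _, (hdual T).mp hT.2⟩
  · intro T' _
    simp only [compl_compl, Finset.image_image, Equiv.self_comp_symm, Finset.image_id]
  · intro T _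
    simp only [Finset.image_image, Equiv.symm_comp_self, Finset.image_id, compl_compl]
  · intro T' hT'
    rw [Finset.mem_filter] at hT'
    set T : Finset G.E := (T'.image φ.symm)ᶜ with hTdef
    have hT : G.IsSpanningTree ↑T := by
      have := (hdual T).symm
      rw [hTdef, compl_compl, Finset.image_image, Equiv.self_comp_symm, Finset.image_id] at this
      exact this.mp hT'.2
    have hTT' : Tᶜ.image φ = T' := by
      rw [hTdef]
      simp only [compl_compl, Finset.image_image, Equiv.self_comp_symm, Finset.image_id]
    have hT'c : T'ᶜ = T.image φ := by
      rw [← hTT', image_compl_eq, compl_compl]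
    rw [hT'c, Finset.prod_image (fun a _ b _ h => φ.injective h)]
    have hmT : T.card = m := hm T hT
    calc (∏ e, v e) * ∏ e ∈ T, v' (φ e)
        = ((∏ e ∈ T, v e) * ∏ e ∈ Tᶜ, v e) * ∏ e ∈ T, ((v e)⁻¹ * κ) := by
          rw [Finset.prod_mul_prod_compl, Finset.prod_congr rfl fun e _ => hv' e]
      _ = ((∏ e ∈ T, v e) * (∏ e ∈ T, v e)⁻¹) * (κ ^ T.card * ∏ e ∈ Tᶜ, v e) := by
          rw [Finset.prod_mul_distrib, Finset.prod_const, Finset.prod_inv_distrib]; ring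
      _ = κ ^ m * ∏ e ∈ Tᶜ, v e := by
          rw [mul_inv_cancel₀ (Finset.prod_ne_zero_iff.mpr fun e _ => hv e), one_mul, hmT]


section Proj

variable {k : Type} [Field k] {E E' : Type}

lemma inv_rep_ne_zero (φ : E ≃ E') (x : Projectivization k (E → k))
    (hx : ∀ e, x.rep e ≠ 0) : (fun e' => (x.rep (φ.symm e'))⁻¹) ≠ 0 := by
  obtain ⟨e, he⟩ := Function.ne_iff.mp x.rep_nonzero
  intro h
  have h2 := congrFun h (φ e)
  simp only [Equiv.symm_apply_apply, Pi.zero_apply, inv_eq_zero] at h2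
  exact hx e h2

/-- The Cremona image of a point with all coordinates nonzero. -/
noncomputable def cpt (φ : E ≃ E') (x : Projectivization k (E → k))
    (hx : ∀ e, x.rep e ≠ 0) : Projectivization k (E' → k) :=
  Projectivization.mk k (fun e' => (x.rep (φ.symm e'))⁻¹) (inv_rep_ne_zero φ x hx)

lemma cpt_rep (φ : E ≃ E') (x : Projectivization k (E → k)) (hx : ∀ e, x.rep e ≠ 0) :
    ∃ c : kˣ, (cpt φ x hx).rep = fun e' => (c : k) * (x.rep (φ.symm e'))⁻¹ := by
  obtain ⟨c, hc⟩ := Projectivization.exists_smul_eq_mk_rep k _ (inv_rep_ne_zero φ x hx)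
  refine ⟨c, ?_⟩
  unfold cpt
  funext e'
  rw [← hc]
  simp [Units.smul_def]

lemma cpt_rep_ne_zero (φ : E ≃ E') (x : Projectivization k (E → k))
    (hx : ∀ e, x.rep e ≠ 0) : ∀ e', (cpt φ x hx).rep e' ≠ 0 := by
  obtain ⟨c, hc⟩ := cpt_rep φ x hx
  intro e'
  rw [hc]
  exact mul_ne_zero (Units.ne_zero c) (inv_ne_zero (hx _))

lemma mk_eq_self (x : Projectivization k (E → k)) (v : E → k) (hv : v ≠ 0)
    (h : ∃ a : kˣ, a • x.rep = v) : Projectivization.mk k v hv = x := by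
  conv_rhs => rw [← Projectivization.mk_rep x]
  exact (Projectivization.mk_eq_mk_iff k v x.rep hv x.rep_nonzero).mpr h

lemma cpt_cpt (φ : E ≃ E') (x : Projectivization k (E → k)) (hx : ∀ e, x.rep e ≠ 0)
    (hx2 : ∀ e', (cpt φ x hx).rep e' ≠ 0) : cpt φ.symm (cpt φ x hx) hx2 = x := by
  obtain ⟨c, hc⟩ := cpt_rep φ x hx
  apply mk_eq_self
  refine ⟨c⁻¹, ?_⟩
  funext e
  have h1 : (cpt φ x hx).rep (φ.symm.symm e) = (c : k) * (x.rep e)⁻¹ := by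
    rw [hc]
    simp
  simp only [Pi.smul_apply, h1, mul_inv_rev, inv_inv, Units.smul_def, smul_eq_mul,
    Units.val_inv_eq_inv_val]
  ring

end Proj


/-- the Cremona transformation restricts to a (biregular) isomorphism
`X_Γ \ Σₙ → X_{Γ^∨} \ Σₙ` between the graph hypersurface of a connected planar
graph and that of its dual, away from the coordinate hyperplanes; consequently
`[X_Γ \ Σₙ] = [X_{Γ^∨} \ Σₙ]` in the Grothendieck ring (for any class functions
invariant under Cremona isomorphisms). -/


theorem cremona_iso_of_graph_hypersurfaces
    (G G' : Multigraph) [Fintype G.E] [DecidableEq G.E] [Fintype G'.E] [DecidableEq G'.E]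
    (φ : G.E ≃ G'.E) (hconn : G.ConnectsIn Set.univ) (hdual : IsDualPair G G' φ)
    (k : Type) [Field k] :
    CremonaIso φ (G.hypersurface k \ coordHyperplanes k G.E)
      (G'.hypersurface k \ coordHyperplanes k G'.E) ∧
    ∀ (R : Type) [CommRing R]
      (cl : Set (Projectivization k (G.E → k)) → R)
      (cl' : Set (Projectivization k (G'.E → k)) → R),
      (∀ A B, CremonaIso φ A B → cl A = cl' B) →
      cl (G.hypersurface k \ coordHyperplanes k G.E) =
        cl' (G'.hypersurface k \ coordHyperplanes k G'.E) := by
  classical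
  obtain ⟨m, hm⟩ : ∃ m, ∀ T : Finset G.E, G.IsSpanningTree ↑T → T.card = m := by
    by_cases hex : ∃ T : Finset G.E, G.IsSpanningTree ↑T
    · obtain ⟨T0, hT0⟩ := hex
      exact ⟨T0.card, fun T hT => spanningTree_card_eq hconn hT hT0⟩
    · exact ⟨0, fun T hT => absurd ⟨T, hT⟩ hex⟩
  have hA : ∀ x : Projectivization k (G.E → k),
      x ∈ G.hypersurface k \ coordHyperplanes k G.E → ∀ e, x.rep e ≠ 0 := by
    intro x hx e he
    exact hx.2 ⟨e, he⟩
  have hB : ∀ y : Projectivization k (G'.E → k),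
      y ∈ G'.hypersurface k \ coordHyperplanes k G'.E → ∀ e', y.rep e' ≠ 0 := by
    intro y hy e' he'
    exact hy.2 ⟨e', he'⟩
  have memB : ∀ (x : Projectivization k (G.E → k))
      (hx : x ∈ G.hypersurface k \ coordHyperplanes k G.E),
      cpt φ x (hA x hx) ∈ G'.hypersurface k \ coordHyperplanes k G'.E := by
    intro x hx
    obtain ⟨c, hc⟩ := cpt_rep φ x (hA x hx)
    have hκ : ∀ e, x.rep e * (cpt φ x (hA x hx)).rep (φ e) = (c : k) := by
      intro e
      rw [hc]
      simp only [Equiv.symm_apply_apply]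
      rw [mul_comm, mul_assoc, inv_mul_cancel₀ (hA x hx e), mul_one]
    have hk := eval_key G G' φ hdual m hm x.rep (cpt φ x (hA x hx)).rep (c : k)
      (hA x hx) hκ
    rw [hx.1] at hk
    constructor
    · have hne : (∏ e, x.rep e) ≠ 0 :=
        Finset.prod_ne_zero_iff.mpr fun e _ => hA x hx e
      have h0 : (∏ e, x.rep e) *
          MvPolynomial.eval₂ (Int.castRingHom k) (cpt φ x (hA x hx)).rep G'.kirchhoff = 0 := by
        rw [hk]; ring
      rcases mul_eq_zero.mp h0 with h | h
      · exact absurd h hne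
      · exact h
    · rintro ⟨e', he'⟩
      exact cpt_rep_ne_zero φ x (hA x hx) e' he'
  have memA : ∀ (y : Projectivization k (G'.E → k))
      (hy : y ∈ G'.hypersurface k \ coordHyperplanes k G'.E),
      cpt φ.symm y (hB y hy) ∈ G.hypersurface k \ coordHyperplanes k G.E := by
    intro y hy
    obtain ⟨c, hc⟩ := cpt_rep φ.symm y (hB y hy)
    have hκ : ∀ e, (cpt φ.symm y (hB y hy)).rep e * y.rep (φ e) = (c : k) := by
      intro e
      rw [hc]
      simp only [Equiv.symm_symm]
      rw [mul_assoc, inv_mul_cancel₀ (hB y hy (φ e)), mul_one]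
    have hk := eval_key G G' φ hdual m hm (cpt φ.symm y (hB y hy)).rep y.rep (c : k)
      (cpt_rep_ne_zero φ.symm y (hB y hy)) hκ
    rw [hy.1, mul_zero] at hk
    constructor
    · have hcm : ((c : k)) ^ m ≠ 0 := pow_ne_zero _ (Units.ne_zero c)
      rcases mul_eq_zero.mp hk.symm with h | h
      · exact absurd h hcm
      · exact h
    · rintro ⟨e, he⟩
      exact cpt_rep_ne_zero φ.symm y (hB y hy) e he
  have key : CremonaIso φ (G.hypersurface k \ coordHyperplanes k G.E)
      (G'.hypersurface k \ coordHyperplanes k G'.E) := by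
    refine ⟨⟨fun x => ⟨cpt φ x.1 (hA x.1 x.2), memB x.1 x.2⟩,
            fun y => ⟨cpt φ.symm y.1 (hB y.1 y.2), memA y.1 y.2⟩, ?_, ?_⟩, ?_⟩
    · intro x
      exact Subtype.ext (cpt_cpt φ x.1 (hA x.1 x.2) (cpt_rep_ne_zero φ x.1 (hA x.1 x.2)))
    · intro y
      exact Subtype.ext (cpt_cpt φ.symm y.1 (hB y.1 y.2) (cpt_rep_ne_zero φ.symm y.1 (hB y.1 y.2)))
    · intro x e e'
      obtain ⟨c, hc⟩ := cpt_rep φ x.1 (hA x.1 x.2)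
      have hconst : ∀ e0, (x.1 : Projectivization k (G.E → k)).rep e0 *
          (cpt φ x.1 (hA x.1 x.2)).rep (φ e0) = (c : k) := by
        intro e0
        rw [hc]
        simp only [Equiv.symm_apply_apply]
        rw [mul_comm, mul_assoc, inv_mul_cancel₀ (hA x.1 x.2 e0), mul_one]
      simp only [Equiv.coe_fn_mk]
      rw [hconst e, hconst e']
  exact ⟨key, fun R _ cl cl' hcl => hcl _ _ key⟩
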